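/- arXiv:2006.09371 — 8 statements merged into one kernel-verified Lean document; each statement's English description precedes it below -/
import Mathlib

section
/- Let X be a proper submodule of M. The following are equivalent: (1) X is a φ-prime submodule of M; (2) for all m ∈ M − X, (X:_R mR) = (X:_R M) ∪ (φ(X):_R mR); (3) for all m ∈ M − X, (X:_R mR) = (X:_R M) or (X:_R mR) = (φ(X):_R mR). -/
open MulOpposite Submodule

variable {R : Type*} [Ring R] {M : Type*} [AddCommGroup M] [Module Rᵐᵒᵖ M]

/-- The product `Y·A` of a set of elements of a right `R`-module `M` and a set of ring
elements: the submodule of all finite sums `Σ yᵢ·aᵢ` with `yᵢ ∈ Y`, `aᵢ ∈ A`. -/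
def sProd (Y : Set M) (A : Set R) : Submodule Rᵐᵒᵖ M :=
  Submodule.span Rᵐᵒᵖ {z | ∃ y ∈ Y, ∃ a ∈ A, z = op a • y}

/-- `(X :_R N) = {r : R | N·r ⊆ X}`. -/
def colR (X : Set M) (N : Set M) : Set R := {r | ∀ m ∈ N, op r • m ∈ X}

/-- `(X :_M A) = {m : M | m·A ⊆ X}`. -/
def colM (X : Set M) (A : Set R) : Set M := {m | ∀ r ∈ A, op r • m ∈ X}

/-- A function `φ : S(M) → S(M) ∪ {∅}` (values are either `∅` or submodules) with
`φ(X) ⊆ X` for every submodule `X`. -/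
def GoodPhi (φ : Submodule Rᵐᵒᵖ M → Set M) : Prop :=
  ∀ N : Submodule Rᵐᵒᵖ M, φ N ⊆ N ∧
    (φ N = (∅ : Set M) ∨ ∃ P : Submodule Rᵐᵒᵖ M, φ N = (P : Set M))

/-- `X` is a φ-prime submodule of the right `R`-module `M`. -/
def PhiPrime (φ : Submodule Rᵐᵒᵖ M → Set M) (X : Submodule Rᵐᵒᵖ M) : Prop :=
  X ≠ ⊤ ∧ ∀ (Y : Submodule Rᵐᵒᵖ M) (I : TwoSidedIdeal R),
    (sProd (Y : Set M) (I : Set R) : Set M) ⊆ (X : Set M) →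
    ¬((sProd (Y : Set M) (I : Set R) : Set M) ⊆ φ X) →
    (Y : Set M) ⊆ (X : Set M) ∨ (I : Set R) ⊆ colR (X : Set M) Set.univ

/-- `X` is a prime submodule of the right `R`-module `M`. -/
def PrimeSub (X : Submodule Rᵐᵒᵖ M) : Prop :=
  X ≠ ⊤ ∧ ∀ (Y : Submodule Rᵐᵒᵖ M) (I : TwoSidedIdeal R),
    (sProd (Y : Set M) (I : Set R) : Set M) ⊆ (X : Set M) →
    (Y : Set M) ⊆ (X : Set M) ∨ (I : Set R) ⊆ colR (X : Set M) Set.univ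

/-- `X` is a weakly prime submodule of the right `R`-module `M`. -/
def WeaklyPrime (X : Submodule Rᵐᵒᵖ M) : Prop :=
  X ≠ ⊤ ∧ ∀ (Y : Submodule Rᵐᵒᵖ M) (I : TwoSidedIdeal R),
    sProd (Y : Set M) (I : Set R) ≠ ⊥ →
    (sProd (Y : Set M) (I : Set R) : Set M) ⊆ (X : Set M) →
    (Y : Set M) ⊆ (X : Set M) ∨ (I : Set R) ⊆ colR (X : Set M) Set.univ

/-- `X` is an almost prime submodule of the right `R`-module `M`. -/
def AlmostPrime (X : Submodule Rᵐᵒᵖ M) : Prop :=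
  X ≠ ⊤ ∧ ∀ (Y : Submodule Rᵐᵒᵖ M) (I : TwoSidedIdeal R),
    (sProd (Y : Set M) (I : Set R) : Set M) ⊆ (X : Set M) →
    ¬((sProd (Y : Set M) (I : Set R) : Set M) ⊆
        (sProd (X : Set M) ((colR (X : Set M) Set.univ : Set R)) : Set M)) →
    (Y : Set M) ⊆ (X : Set M) ∨ (I : Set R) ⊆ colR (X : Set M) Set.univ

/-- `powAct X n = X (X :_R M)ⁿ`. -/
def powAct (X : Submodule Rᵐᵒᵖ M) : ℕ → Submodule Rᵐᵒᵖ M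
  | 0 => X
  | n + 1 => sProd (powAct X n : Set M) ((colR (X : Set M) Set.univ : Set R))

/-- The product of two sets of ring elements: all finite sums `Σ aᵢbᵢ`, `aᵢ ∈ A`, `bᵢ ∈ B`. -/
def idMul (A B : Set R) : Set R :=
  (AddSubmonoid.closure {x | ∃ a ∈ A, ∃ b ∈ B, x = a * b} : AddSubmonoid R)

/-- A prime (two-sided) ideal of a possibly noncommutative ring. -/
def TIPrime (P : TwoSidedIdeal R) : Prop :=
  (P : Set R) ≠ Set.univ ∧ ∀ I J : TwoSidedIdeal R,
    idMul (I : Set R) (J : Set R) ⊆ (P : Set R) →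
    (I : Set R) ⊆ (P : Set R) ∨ (J : Set R) ⊆ (P : Set R)

/-- The radical `√A`: the intersection of all prime two-sided ideals containing `A`. -/
def radSet (A : Set R) : Set R :=
  {x | ∀ P : TwoSidedIdeal R, TIPrime P → A ⊆ (P : Set R) → x ∈ (P : Set R)}

/-- A ψ-prime two-sided ideal of a possibly noncommutative ring. -/
def PsiPrime (ψ : TwoSidedIdeal R → Set R) (A : TwoSidedIdeal R) : Prop :=
  (A : Set R) ≠ Set.univ ∧ ∀ I J : TwoSidedIdeal R,
    idMul (I : Set R) (J : Set R) ⊆ (A : Set R) →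
    ¬(idMul (I : Set R) (J : Set R) ⊆ ψ A) →
    (I : Set R) ⊆ (A : Set R) ∨ (J : Set R) ⊆ (A : Set R)

/-- The induced function `φ_Y` on submodules of `M/Y`: `φ_Y(X/Y) = (φ(X)+Y)/Y`. -/
def phiQuot (φ : Submodule Rᵐᵒᵖ M → Set M) (Y : Submodule Rᵐᵒᵖ M) :
    Submodule Rᵐᵒᵖ (M ⧸ Y) → Set (M ⧸ Y) :=
  fun Q => Y.mkQ '' (φ (Q.comap Y.mkQ))

/-- The colon `(X :_R Y)` of two submodules, as a two-sided ideal of `R`. -/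
def colTI (X Y : Submodule Rᵐᵒᵖ M) : TwoSidedIdeal R :=
  TwoSidedIdeal.mk' (colR (X : Set M) (Y : Set M))
    (by intro m hm; simp)
    (by intro x y hx hy m hm
        rw [op_add, add_smul]
        exact X.add_mem (hx m hm) (hy m hm))
    (by intro x hx m hm
        rw [op_neg, neg_smul]
        exact X.neg_mem (hx m hm))
    (by intro x y hy m hm
        rw [op_mul, mul_smul]
        exact hy _ (Y.smul_mem (op x) hm))
    (by intro x y hx m hm
        rw [op_mul, mul_smul]
        exact X.smul_mem (op y) (hx m hm))

/-- The colon `(X :_M I)` as a submodule of `M`, for a two-sided ideal `I`. -/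
def colMS (X : Submodule Rᵐᵒᵖ M) (I : TwoSidedIdeal R) : Submodule Rᵐᵒᵖ M where
  carrier := colM (X : Set M) (I : Set R)
  add_mem' := by
    intro a b ha hb r hr
    rw [smul_add]
    exact X.add_mem (ha r hr) (hb r hr)
  zero_mem' := by
    intro r hr
    rw [smul_zero]
    exact X.zero_mem
  smul_mem' := by
    intro c m hm r hr
    rw [← mul_smul, show op r * c = op (unop c * r) from by rw [op_mul, op_unop]]
    exact hm _ (I.mul_mem_left _ _ hr)

/-- `M` is a multiplication right `R`-module: every submodule `X` equals `M(X :_R M)`. -/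
def IsMultiplication (R : Type*) [Ring R] (M : Type*) [AddCommGroup M]
    [Module Rᵐᵒᵖ M] : Prop :=
  ∀ X : Submodule Rᵐᵒᵖ M, X = sProd (Set.univ : Set M) ((colR (X : Set M) Set.univ : Set R))

/-- The product `XY = M(X :_R M)(Y :_R M)` of two submodules of a multiplication module. -/
def mprod (X Y : Submodule Rᵐᵒᵖ M) : Submodule Rᵐᵒᵖ M :=
  sProd ((sProd (Set.univ : Set M) ((colR (X : Set M) Set.univ : Set R)) : Submodule Rᵐᵒᵖ M) : Set M)
    ((colR (Y : Set M) Set.univ : Set R))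

/-- A φ-m-system in a right `R`-module `M`. -/
def PhiMSystem (φ : Submodule Rᵐᵒᵖ M → Set M) (S : Set M) : Prop :=
  S.Nonempty ∧ ∀ (Y₁ Y₂ : Submodule Rᵐᵒᵖ M) (I : TwoSidedIdeal R),
    ((Y₁ ⊔ Y₂ : Submodule Rᵐᵒᵖ M) : Set M) ∩ S ≠ ∅ →
    ((Y₁ ⊔ sProd (Set.univ : Set M) (I : Set R) : Submodule Rᵐᵒᵖ M) : Set M) ∩ S ≠ ∅ →
    ¬((sProd (Y₂ : Set M) (I : Set R) : Set M) ⊆ φ (Submodule.span Rᵐᵒᵖ Sᶜ)) →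
    ((Y₁ ⊔ sProd (Y₂ : Set M) (I : Set R) : Submodule Rᵐᵒᵖ M) : Set M) ∩ S ≠ ∅


section Aux

lemma gen_mem_sProd {Y : Set M} {A : Set R} {y : M} {a : R} (hy : y ∈ Y) (ha : a ∈ A) :
    op a • y ∈ sProd Y A :=
  Submodule.subset_span ⟨y, hy, a, ha, rfl⟩

lemma sProd_subset {Y : Set M} {A : Set R} {X : Submodule Rᵐᵒᵖ M}
    (h : ∀ y ∈ Y, ∀ a ∈ A, op a • y ∈ X) : (sProd Y A : Set M) ⊆ (X : Set M) := by
  refine Submodule.span_le.2 ?_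
  rintro z ⟨y, hy, a, ha, rfl⟩
  exact h y hy a ha

lemma colR_mono {X X' : Set M} (h : X ⊆ X') (N : Set M) :
    (colR X N : Set R) ⊆ (colR X' N : Set R) :=
  fun _ hr m hm => h (hr m hm)

lemma colR_univ_subset (X : Set M) (N : Set M) :
    (colR X Set.univ : Set R) ⊆ (colR X N : Set R) :=
  fun _ hr m _ => hr m trivial

lemma zero_mem_colR (X : Submodule Rᵐᵒᵖ M) (N : Set M) : (0 : R) ∈ colR (X : Set M) N := by
  intro m _
  rw [op_zero, zero_smul]
  exact X.zero_mem

lemma sub_mem_colR (X : Submodule Rᵐᵒᵖ M) (N : Set M) {r s : R}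
    (hr : r ∈ colR (X : Set M) N) (hs : s ∈ colR (X : Set M) N) :
    r - s ∈ colR (X : Set M) N := by
  intro m hm
  rw [op_sub, sub_smul]
  exact X.sub_mem (hr m hm) (hs m hm)

lemma I_subset_colR {Y X : Submodule Rᵐᵒᵖ M} {I : TwoSidedIdeal R}
    (hsub : (sProd (Y : Set M) (I : Set R) : Set M) ⊆ (X : Set M)) {y : M} (hy : y ∈ Y) :
    (I : Set R) ⊆ colR (X : Set M) (Submodule.span Rᵐᵒᵖ ({y} : Set M) : Set M) := by
  intro a ha n hn
  rcases Submodule.mem_span_singleton.1 hn with ⟨c, rfl⟩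
  have h1 : op a • (c • y) = op (unop c * a) • y := by
    rw [op_mul, op_unop, mul_smul]
  rw [h1]
  exact hsub (gen_mem_sProd hy (I.mul_mem_left (unop c) a ha))

lemma colTI_coe (X : Submodule Rᵐᵒᵖ M) (Y : Submodule Rᵐᵒᵖ M) :
    ((colTI X Y : TwoSidedIdeal R) : Set R) = colR (X : Set M) (Y : Set M) :=
  TwoSidedIdeal.coe_mk' _ _ _ _ _ _

end Aux

/-- For a proper submodule `X` of `M`, TFAE:
(1) `X` is φ-prime; (2) for all `m ∈ M − X`,
`(X :_R mR) = (X :_R M) ∪ (φ(X) :_R mR)`; (3) for all `m ∈ M − X`,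
`(X :_R mR) = (X :_R M)` or `(X :_R mR) = (φ(X) :_R mR)`. -/
theorem stmt_0 (φ : Submodule Rᵐᵒᵖ M → Set M) (hφ : GoodPhi φ)
    (X : Submodule Rᵐᵒᵖ M) (hX : X ≠ ⊤) :
    [PhiPrime φ X,
     ∀ m : M, m ∉ X →
       (colR (X : Set M) (Submodule.span Rᵐᵒᵖ ({m} : Set M) : Set M) : Set R) =
         (colR (X : Set M) Set.univ : Set R) ∪
           (colR (φ X) (Submodule.span Rᵐᵒᵖ ({m} : Set M) : Set M) : Set R),
     ∀ m : M, m ∉ X →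
       (colR (X : Set M) (Submodule.span Rᵐᵒᵖ ({m} : Set M) : Set M) : Set R) =
           (colR (X : Set M) Set.univ : Set R) ∨
         (colR (X : Set M) (Submodule.span Rᵐᵒᵖ ({m} : Set M) : Set M) : Set R) =
           (colR (φ X) (Submodule.span Rᵐᵒᵖ ({m} : Set M) : Set M) : Set R)].TFAE := by
  have hφX := (hφ X).1
  tfae_have 1 → 3 := by
    intro h1 m hm
    set Y := Submodule.span Rᵐᵒᵖ ({m} : Set M) with hY
    have hmY : m ∈ Y := Submodule.mem_span_singleton_self m
    set I : TwoSidedIdeal R := colTI X Y with hI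
    have hIcoe : (I : Set R) = colR (X : Set M) (Y : Set M) := colTI_coe X Y
    have hsub : (sProd (Y : Set M) (I : Set R) : Set M) ⊆ (X : Set M) := by
      refine sProd_subset ?_
      intro y hy a ha
      rw [hIcoe] at ha
      exact ha y hy
    by_cases hphi : (sProd (Y : Set M) (I : Set R) : Set M) ⊆ φ X
    · right
      refine Set.Subset.antisymm ?_ (colR_mono hφX _)
      intro r hr n hn
      exact hphi (gen_mem_sProd hn (by rw [hIcoe]; exact hr))
    · rcases h1.2 Y I hsub hphi with hc | hc
      · exact absurd (hc hmY) hm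
      · left
        refine Set.Subset.antisymm ?_ (colR_univ_subset _ _)
        rw [← hIcoe]
        exact hc
  tfae_have 3 → 2 := by
    intro h3 m hm
    have hsubs : (colR (X : Set M) Set.univ : Set R) ∪
        (colR (φ X) (Submodule.span Rᵐᵒᵖ ({m} : Set M) : Set M) : Set R) ⊆
        colR (X : Set M) (Submodule.span Rᵐᵒᵖ ({m} : Set M) : Set M) :=
      Set.union_subset (colR_univ_subset _ _) (colR_mono hφX _)
    rcases h3 m hm with h | h
    · exact Set.Subset.antisymm (h ▸ Set.subset_union_left) hsubs
    · exact Set.Subset.antisymm (h ▸ Set.subset_union_right) hsubs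
  tfae_have 2 → 3 := by
    intro h2 m hm
    have hAeq := h2 m hm
    set N := (Submodule.span Rᵐᵒᵖ ({m} : Set M) : Set M) with hN
    set A : Set R := colR (X : Set M) N with hA
    set B : Set R := colR (X : Set M) Set.univ with hB
    set C : Set R := colR (φ X) N with hC
    have hBA : B ⊆ A := colR_univ_subset _ _
    by_cases hAC : A ⊆ C
    · right
      exact Set.Subset.antisymm hAC (colR_mono hφX _)
    · left
      rcases Set.not_subset.1 hAC with ⟨b, hbA, hbC⟩
      have hbB : b ∈ B := by
        rcases (hAeq ▸ hbA) with h | h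
        · exact h
        · exact absurd h hbC
      rcases (hφ X).2 with hempty | ⟨P, hP⟩
      · -- C = ∅, so A = B
        refine Set.Subset.antisymm ?_ hBA
        intro a haA
        rcases (hAeq ▸ haA) with h | h
        · exact h
        · exfalso
          have hcontr := h m (Submodule.mem_span_singleton_self m)
          rw [hempty] at hcontr
          exact hcontr
      · refine Set.Subset.antisymm ?_ hBA
        intro a haA
        rcases (hAeq ▸ haA) with h | h
        · exact h
        · -- a ∈ C; then a + b ∈ A = B ∪ C
          have habA : a + b ∈ A := by
            intro n hn
            rw [op_add, add_smul]
            exact X.add_mem (haA n hn) (hbA n hn)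
          rcases (hAeq ▸ habA) with h2' | h2'
          · -- a + b ∈ B and b ∈ B give a ∈ B
            have : a = (a + b) - b := (add_sub_cancel_right a b).symm
            rw [hB, this]
            exact sub_mem_colR X _ (hB ▸ h2') (hB ▸ hbB)
          · -- a + b ∈ C and a ∈ C give b ∈ C, contradiction
            exfalso
            apply hbC
            have hPsub : ∀ x y : R, x ∈ C → y ∈ C → x - y ∈ C := by
              intro x y hx hy n hn
              rw [hC, hP] at hx hy
              show op (x - y) • n ∈ φ X
              rw [hP, op_sub, sub_smul]
              exact P.sub_mem (hx n hn) (hy n hn)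
            have hb : b = (a + b) - a := (add_sub_cancel_left a b).symm
            rw [hb]
            exact hPsub _ _ h2' h
  tfae_have 3 → 1 := by
    intro h3
    refine ⟨hX, ?_⟩
    intro Y I hsub hnphi
    by_cases hYX : (Y : Set M) ⊆ (X : Set M)
    · exact Or.inl hYX
    · right
      by_contra hIX
      rcases Set.not_subset.1 hYX with ⟨y₁, hy₁Y, hy₁X⟩
      have key : ∀ y ∈ Y, y ∉ X → ∀ a ∈ (I : Set R), op a • y ∈ φ X := by
        intro y hyY hyX a ha
        have hIcol := I_subset_colR hsub hyY
        rcases h3 y hyX with h | h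
        · exact absurd (h ▸ hIcol) hIX
        · exact (h ▸ hIcol) ha y (Submodule.mem_span_singleton_self y)
      rcases (hφ X).2 with hempty | ⟨P, hP⟩
      · have := key y₁ hy₁Y hy₁X 0 I.zero_mem
        rw [hempty] at this
        exact this
      · apply hnphi
        rw [hP]
        refine sProd_subset ?_
        intro y hyY a ha
        by_cases hyX : y ∈ X
        · have h₁ : op a • (y + y₁) ∈ φ X := by
            refine key (y + y₁) (Y.add_mem hyY hy₁Y) ?_ a ha
            intro hc
            exact hy₁X (by simpa using X.sub_mem hc hyX)
          have h₂ : op a • y₁ ∈ φ X := key y₁ hy₁Y hy₁X a ha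
          rw [hP] at h₁ h₂
          have : op a • y = op a • (y + y₁) - op a • y₁ := by
            rw [smul_add]; abel
          rw [this]
          exact P.sub_mem h₁ h₂
        · have := key y hyY hyX a ha
          rwa [hP] at this
  tfae_finish
end

section
/- Let X be a proper submodule of M. The following are equivalent: (1) X is φ-prime; (2) for every right ideal I of R and every submodule Y of M, YI ⊆ X and YI ⊄ φ(X) imply Y ⊆ X or I ⊆ (X:_R M); (3) for every left ideal I of R and every submodule Y of M, YI ⊆ X and YI ⊄ φ(X) imply Y ⊆ X or I ⊆ (X:_R M); (4) for every a ∈ R and submodule Y of M, Y(RaR) ⊆ X and Y(RaR) ⊄ φ(X) imply Y ⊆ X or a ∈ (X:_R M); (5) for every a ∈ R and submodule Y of M, Y(aR) ⊆ X and Y(aR) ⊄ φ(X) imply Y ⊆ X or a ∈ (X:_R M); (6) for every a ∈ R and submodule Y of M, Y(Ra) ⊆ X and Y(Ra) ⊄ φ(X) imply Y ⊆ X or a ∈ (X:_R M). -/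
open MulOpposite Submodule

variable {R : Type*} [Ring R] {M : Type*} [AddCommGroup M] [Module Rᵐᵒᵖ M]

section Aux

lemma smul_mem_sProd {Y : Set M} {A : Set R} {a : R} (ha : a ∈ A) {y : M} (hy : y ∈ Y) :
    op a • y ∈ sProd Y A :=
  Submodule.subset_span ⟨y, hy, a, ha, rfl⟩

lemma sProd_le_iff {Y : Set M} {A : Set R} {X : Submodule Rᵐᵒᵖ M} :
    sProd Y A ≤ X ↔ ∀ a ∈ A, ∀ y ∈ Y, op a • y ∈ X := by
  rw [sProd, Submodule.span_le]
  constructor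
  · intro h a ha y hy
    exact h ⟨y, hy, a, ha, rfl⟩
  · rintro h z ⟨y, hy, a, ha, rfl⟩
    exact h a ha y hy

lemma sProd_mono {Y : Set M} {A B : Set R} (h : A ⊆ B) : sProd Y A ≤ sProd Y B :=
  Submodule.span_mono (by rintro z ⟨y, hy, b, hb, rfl⟩; exact ⟨y, hy, b, h hb, rfl⟩)

lemma sProd_RaR_eq_aR (Y : Submodule Rᵐᵒᵖ M) (a : R) :
    sProd (Y : Set M) {x : R | ∃ r s : R, x = r * a * s}
      = sProd (Y : Set M) {x : R | ∃ r : R, x = a * r} := by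
  apply le_antisymm
  · refine sProd_le_iff.mpr ?_
    rintro b ⟨r, s, rfl⟩ y hy
    have h : op (r * a * s) • y = op (a * s) • (op r • y) := by
      rw [← mul_smul, ← op_mul, mul_assoc]
    rw [h]
    exact smul_mem_sProd (show a * s ∈ {x : R | ∃ r : R, x = a * r} from ⟨s, rfl⟩) (Y.smul_mem (op r) hy)
  · refine sProd_le_iff.mpr ?_
    rintro b ⟨r, rfl⟩ y hy
    exact smul_mem_sProd (show a * r ∈ {x : R | ∃ r s : R, x = r * a * s} from ⟨1, r, by rw [one_mul]⟩) hy

lemma sProd_aR_eq_Ra (Y : Submodule Rᵐᵒᵖ M) (a : R) :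
    sProd (Y : Set M) {x : R | ∃ r : R, x = a * r}
      = sProd (Y : Set M) {x : R | ∃ r : R, x = r * a} := by
  apply le_antisymm
  · refine sProd_le_iff.mpr ?_
    rintro b ⟨r, rfl⟩ y hy
    have h : op (a * r) • y = op r • (op a • y) := by rw [op_mul, mul_smul]
    rw [h]
    exact Submodule.smul_mem _ _ (smul_mem_sProd (show a ∈ {x : R | ∃ r : R, x = r * a} from ⟨1, (one_mul a).symm⟩) hy)
  · refine sProd_le_iff.mpr ?_
    rintro b ⟨r, rfl⟩ y hy
    have h : op (r * a) • y = op a • (op r • y) := by rw [op_mul, mul_smul]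
    rw [h]
    exact smul_mem_sProd (show a ∈ {x : R | ∃ r : R, x = a * r} from ⟨1, (mul_one a).symm⟩) (Y.smul_mem (op r) hy)

/-- The two-sided ideal `RaR` generated by an element `a`. -/
def genTI (a : R) : TwoSidedIdeal R :=
  TwoSidedIdeal.mk' (AddSubmonoid.closure {x : R | ∃ r s : R, x = r * a * s})
    (AddSubmonoid.zero_mem _)
    (fun hx hy => AddSubmonoid.add_mem _ hx hy)
    (fun {x} hx => by
      refine AddSubmonoid.closure_induction ?_ ?_ ?_ hx
      · rintro y ⟨r, s, rfl⟩
        exact AddSubmonoid.subset_closure ⟨-r, s, by noncomm_ring⟩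
      · simpa using AddSubmonoid.zero_mem _
      · intro u v _ _ hu hv
        rw [neg_add]
        exact AddSubmonoid.add_mem _ hu hv)
    (fun {x y} hy => by
      refine AddSubmonoid.closure_induction ?_ ?_ ?_ hy
      · rintro z ⟨r, s, rfl⟩
        exact AddSubmonoid.subset_closure ⟨x * r, s, by noncomm_ring⟩
      · simpa using AddSubmonoid.zero_mem _
      · intro u v _ _ hu hv
        rw [mul_add]
        exact AddSubmonoid.add_mem _ hu hv)
    (fun {x y} hx => by
      refine AddSubmonoid.closure_induction ?_ ?_ ?_ hx
      · rintro z ⟨r, s, rfl⟩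
        exact AddSubmonoid.subset_closure ⟨r, s * y, by noncomm_ring⟩
      · simpa using AddSubmonoid.zero_mem _
      · intro u v _ _ hu hv
        rw [add_mul]
        exact AddSubmonoid.add_mem _ hu hv)

lemma mem_genTI_self (a : R) : a ∈ genTI a := by
  rw [genTI, TwoSidedIdeal.mem_mk']
  exact AddSubmonoid.subset_closure ⟨1, 1, by noncomm_ring⟩

lemma sProd_genTI (Y : Set M) (a : R) :
    sProd Y ((genTI a : Set R)) = sProd Y {x : R | ∃ r s : R, x = r * a * s} := by
  apply le_antisymm
  · refine sProd_le_iff.mpr ?_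
    intro b hb y hy
    rw [genTI, TwoSidedIdeal.coe_mk'] at hb
    refine AddSubmonoid.closure_induction ?_ ?_ ?_ hb
    · intro z hz
      exact smul_mem_sProd hz hy
    · rw [op_zero, zero_smul]
      exact Submodule.zero_mem _
    · intro u v _ _ hu hv
      rw [op_add, add_smul]
      exact Submodule.add_mem _ hu hv
  · refine sProd_mono ?_
    intro z hz
    rw [genTI, SetLike.mem_coe, TwoSidedIdeal.mem_mk']
    exact AddSubmonoid.subset_closure hz

lemma trick_aux (φ : Submodule Rᵐᵒᵖ M → Set M) (hφ : GoodPhi φ) (X : Submodule Rᵐᵒᵖ M)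
    (S : R → Set R) (hself : ∀ a, a ∈ S a)
    (hcond : ∀ (a : R) (Y : Submodule Rᵐᵒᵖ M),
      (sProd (Y : Set M) (S a) : Set M) ⊆ (X : Set M) →
      ¬((sProd (Y : Set M) (S a) : Set M) ⊆ φ X) →
      (Y : Set M) ⊆ (X : Set M) ∨ a ∈ colR (X : Set M) Set.univ)
    (T : Set R) (hTS : ∀ a ∈ T, S a ⊆ T) (hTadd : ∀ a b, a ∈ T → b ∈ T → a + b ∈ T)
    (Y : Submodule Rᵐᵒᵖ M)
    (h1 : (sProd (Y : Set M) T : Set M) ⊆ (X : Set M))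
    (h2 : ¬((sProd (Y : Set M) T : Set M) ⊆ φ X)) :
    (Y : Set M) ⊆ (X : Set M) ∨ T ⊆ colR (X : Set M) Set.univ := by
  by_cases hYX : (Y : Set M) ⊆ (X : Set M)
  · exact Or.inl hYX
  right
  intro a ha
  have hSaX : ∀ c ∈ T, (sProd (Y : Set M) (S c) : Set M) ⊆ (X : Set M) := fun c hc =>
    Set.Subset.trans (SetLike.coe_subset_coe.mpr (sProd_mono (hTS c hc))) h1
  by_cases hsub : (sProd (Y : Set M) (S a) : Set M) ⊆ φ X
  · have h0 : (0 : M) ∈ φ X := hsub (Submodule.zero_mem _)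
    obtain ⟨P, hP⟩ : ∃ P : Submodule Rᵐᵒᵖ M, φ X = (P : Set M) := by
      rcases (hφ X).2 with h | h
      · rw [h] at h0; exact absurd h0 (Set.notMem_empty 0)
      · exact h
    rw [hP] at hsub h2
    have hex : ¬ ∀ b ∈ T, ∀ y ∈ (Y : Set M), op b • y ∈ P := by
      intro h
      exact h2 (SetLike.coe_subset_coe.mpr (sProd_le_iff.mpr h))
    push_neg at hex
    obtain ⟨b, hb, y, hy, hby⟩ := hex
    have hbP : ¬((sProd (Y : Set M) (S b) : Set M) ⊆ (P : Set M)) := fun h =>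
      hby (h (smul_mem_sProd (hself b) hy))
    have hb' := hcond b Y (hSaX b hb) (by rw [hP]; exact hbP)
    have habP : ¬((sProd (Y : Set M) (S (a + b)) : Set M) ⊆ (P : Set M)) := by
      intro h
      have hab : op (a + b) • y ∈ P := h (smul_mem_sProd (hself (a + b)) hy)
      have hay : op a • y ∈ P := hsub (smul_mem_sProd (hself a) hy)
      have heq : op b • y = op (a + b) • y - op a • y := by
        rw [op_add, add_smul]; abel
      exact hby (heq ▸ P.sub_mem hab hay)
    have hab' := hcond (a + b) Y (hSaX _ (hTadd a b ha hb)) (by rw [hP]; exact habP)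
    rcases hb' with h | hbcol
    · exact absurd h hYX
    rcases hab' with h | habcol
    · exact absurd h hYX
    intro m hm
    have heq : op a • m = op (a + b) • m - op b • m := by
      rw [op_add, add_smul]; abel
    rw [heq]
    exact X.sub_mem (habcol m (Set.mem_univ m)) (hbcol m (Set.mem_univ m))
  · rcases hcond a Y (hSaX a ha) hsub with h | h
    · exact absurd h hYX
    · exact h

end Aux

/-- For a proper submodule `X` of `M`, TFAE: (1) `X` is φ-prime;
(2) the φ-prime condition for all right ideals; (3) for all left ideals;
(4) for the two-sided ideals `RaR`; (5) for the right ideals `aR`;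
(6) for the left ideals `Ra`. -/
theorem stmt_1 (φ : Submodule Rᵐᵒᵖ M → Set M) (hφ : GoodPhi φ)
    (X : Submodule Rᵐᵒᵖ M) (hX : X ≠ ⊤) :
    [PhiPrime φ X,
     ∀ (I : Submodule Rᵐᵒᵖ R) (Y : Submodule Rᵐᵒᵖ M),
       (sProd (Y : Set M) (I : Set R) : Set M) ⊆ (X : Set M) →
       ¬((sProd (Y : Set M) (I : Set R) : Set M) ⊆ φ X) →
       (Y : Set M) ⊆ (X : Set M) ∨ (I : Set R) ⊆ (colR (X : Set M) Set.univ : Set R),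
     ∀ (I : Ideal R) (Y : Submodule Rᵐᵒᵖ M),
       (sProd (Y : Set M) (I : Set R) : Set M) ⊆ (X : Set M) →
       ¬((sProd (Y : Set M) (I : Set R) : Set M) ⊆ φ X) →
       (Y : Set M) ⊆ (X : Set M) ∨ (I : Set R) ⊆ (colR (X : Set M) Set.univ : Set R),
     ∀ (a : R) (Y : Submodule Rᵐᵒᵖ M),
       (sProd (Y : Set M) {x : R | ∃ r s : R, x = r * a * s} : Set M) ⊆ (X : Set M) →
       ¬((sProd (Y : Set M) {x : R | ∃ r s : R, x = r * a * s} : Set M) ⊆ φ X) →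
       (Y : Set M) ⊆ (X : Set M) ∨ a ∈ (colR (X : Set M) Set.univ : Set R),
     ∀ (a : R) (Y : Submodule Rᵐᵒᵖ M),
       (sProd (Y : Set M) {x : R | ∃ r : R, x = a * r} : Set M) ⊆ (X : Set M) →
       ¬((sProd (Y : Set M) {x : R | ∃ r : R, x = a * r} : Set M) ⊆ φ X) →
       (Y : Set M) ⊆ (X : Set M) ∨ a ∈ (colR (X : Set M) Set.univ : Set R),
     ∀ (a : R) (Y : Submodule Rᵐᵒᵖ M),
       (sProd (Y : Set M) {x : R | ∃ r : R, x = r * a} : Set M) ⊆ (X : Set M) →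
       ¬((sProd (Y : Set M) {x : R | ∃ r : R, x = r * a} : Set M) ⊆ φ X) →
       (Y : Set M) ⊆ (X : Set M) ∨ a ∈ (colR (X : Set M) Set.univ : Set R)].TFAE := by
  tfae_have 1 → 4 := by
    intro h a Y h1 h2
    have e : (sProd (Y : Set M) ((genTI a : Set R)) : Set M)
        = (sProd (Y : Set M) {x : R | ∃ r s : R, x = r * a * s} : Set M) := by
      rw [sProd_genTI]
    rcases h.2 Y (genTI a) (by rw [e]; exact h1) (by rw [e]; exact h2) with hy | hi
    · exact Or.inl hy
    · exact Or.inr (hi (mem_genTI_self a))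
  tfae_have 4 → 5 := by
    intro h a Y h1 h2
    have e : (sProd (Y : Set M) {x : R | ∃ r s : R, x = r * a * s} : Set M)
        = (sProd (Y : Set M) {x : R | ∃ r : R, x = a * r} : Set M) := by
      rw [sProd_RaR_eq_aR]
    exact h a Y (by rw [e]; exact h1) (by rw [e]; exact h2)
  tfae_have 5 → 6 := by
    intro h a Y h1 h2
    have e : (sProd (Y : Set M) {x : R | ∃ r : R, x = a * r} : Set M)
        = (sProd (Y : Set M) {x : R | ∃ r : R, x = r * a} : Set M) := by
      rw [sProd_aR_eq_Ra]
    exact h a Y (by rw [e]; exact h1) (by rw [e]; exact h2)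
  tfae_have 6 → 1 := by
    intro h
    refine ⟨hX, fun Y I h1 h2 => ?_⟩
    exact trick_aux φ hφ X (fun a => {x : R | ∃ r : R, x = r * a})
      (fun a => ⟨1, (one_mul a).symm⟩) h (I : Set R)
      (by rintro c hc x ⟨r, rfl⟩; exact I.mul_mem_left r c hc)
      (fun a b ha hb => I.add_mem ha hb) Y h1 h2
  tfae_have 5 → 2 := by
    intro h I Y h1 h2
    exact trick_aux φ hφ X (fun a => {x : R | ∃ r : R, x = a * r})
      (fun a => ⟨1, (mul_one a).symm⟩) h (I : Set R)
      (by rintro c hc x ⟨r, rfl⟩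
          show c * r ∈ I
          rw [show c * r = op r • c from rfl]
          exact I.smul_mem (op r) hc)
      (fun a b ha hb => I.add_mem ha hb) Y h1 h2
  tfae_have 6 → 3 := by
    intro h I Y h1 h2
    exact trick_aux φ hφ X (fun a => {x : R | ∃ r : R, x = r * a})
      (fun a => ⟨1, (one_mul a).symm⟩) h (I : Set R)
      (by rintro c hc x ⟨r, rfl⟩
          show r * c ∈ I
          rw [show r * c = r • c from rfl]
          exact I.smul_mem r hc)
      (fun a b ha hb => I.add_mem ha hb) Y h1 h2
  tfae_have 2 → 1 := by
    intro h
    refine ⟨hX, fun Y I h1 h2 => ?_⟩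
    exact h { carrier := (I : Set R),
              add_mem' := fun ha hb => I.add_mem ha hb,
              zero_mem' := I.zero_mem,
              smul_mem' := fun c x hx => by
                show c • x ∈ I
                rw [← op_unop c, op_smul_eq_mul]
                exact I.mul_mem_right x (unop c) hx } Y h1 h2
  tfae_have 3 → 1 := by
    intro h
    refine ⟨hX, fun Y I h1 h2 => ?_⟩
    exact h { carrier := (I : Set R),
              add_mem' := fun ha hb => I.add_mem ha hb,
              zero_mem' := I.zero_mem,
              smul_mem' := fun c x hx => by
                show c • x ∈ I
                rw [smul_eq_mul]
                exact I.mul_mem_left c x hx } Y h1 h2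
  tfae_finish
end

section
/- If X is a φ-prime submodule of M such that X(X:_R M) ⊄ φ(X), then X is a prime submodule of M. -/
open MulOpposite Submodule

variable {R : Type*} [Ring R] {M : Type*} [AddCommGroup M] [Module Rᵐᵒᵖ M]

/-- If `X` is a φ-prime submodule of `M` such that
`X(X :_R M) ⊄ φ(X)`, then `X` is a prime submodule of `M`. -/
theorem stmt_2 (φ : Submodule Rᵐᵒᵖ M → Set M) (hφ : GoodPhi φ)
    (X : Submodule Rᵐᵒᵖ M) (hX : PhiPrime φ X)
    (h : ¬((sProd (X : Set M) ((colR (X : Set M) Set.univ : Set R)) : Set M) ⊆ φ X)) :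
    PrimeSub X := by
  refine ⟨hX.1, fun Y I hYI => ?_⟩
  -- the sum ideal I + (X :_R M)
  have hzero : (0 : R) ∈ colR (X : Set M) Set.univ := by
    intro m _; simp
  set C : Set R := {a | ∃ i ∈ (I : Set R), ∃ j ∈ colR (X : Set M) Set.univ, a = i + j} with hC
  have Czero : (0 : R) ∈ C := ⟨0, I.zero_mem, 0, hzero, by simp⟩
  have Cadd : ∀ {x y : R}, x ∈ C → y ∈ C → x + y ∈ C := by
    rintro x y ⟨i1, hi1, j1, hj1, rfl⟩ ⟨i2, hi2, j2, hj2, rfl⟩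
    exact ⟨i1 + i2, I.add_mem hi1 hi2,
      j1 + j2, fun m hm => by rw [op_add, add_smul]; exact X.add_mem (hj1 m hm) (hj2 m hm),
      by rw [add_add_add_comm]⟩
  have Cneg : ∀ {x : R}, x ∈ C → -x ∈ C := by
    rintro x ⟨i, hi, j, hj, rfl⟩
    exact ⟨-i, I.neg_mem hi, -j,
      fun m hm => by rw [op_neg, neg_smul]; exact X.neg_mem (hj m hm), by rw [neg_add]⟩
  have CmulL : ∀ {x y : R}, y ∈ C → x * y ∈ C := by
    rintro x y ⟨i, hi, j, hj, rfl⟩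
    exact ⟨x * i, I.mul_mem_left x i hi,
      x * j, fun m hm => by
        rw [op_mul, mul_smul]; exact hj _ trivial, by rw [mul_add]⟩
  have CmulR : ∀ {x y : R}, x ∈ C → x * y ∈ C := by
    rintro x y ⟨i, hi, j, hj, rfl⟩
    exact ⟨i * y, I.mul_mem_right i y hi,
      j * y, fun m hm => by
        rw [op_mul, mul_smul]; exact X.smul_mem _ (hj _ trivial), by rw [add_mul]⟩
  set J : TwoSidedIdeal R := TwoSidedIdeal.mk' C Czero Cadd Cneg CmulL CmulR with hJ
  have hJmem : ∀ a : R, a ∈ J ↔ a ∈ C := fun a =>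
    TwoSidedIdeal.mem_mk' C Czero Cadd Cneg CmulL CmulR a
  -- sProd (Y ⊔ X) J ⊆ X
  have h1 : (sProd ((Y ⊔ X : Submodule Rᵐᵒᵖ M) : Set M) (J : Set R) : Set M)
      ⊆ (X : Set M) := by
    have : sProd ((Y ⊔ X : Submodule Rᵐᵒᵖ M) : Set M) (J : Set R) ≤ X := by
      apply Submodule.span_le.mpr
      rintro z ⟨y, hy, a, ha, rfl⟩
      obtain ⟨i, hi, j, hj, rfl⟩ := (hJmem a).mp ha
      obtain ⟨u, hu, v, hv, rfl⟩ := Submodule.mem_sup.mp hy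
      rw [op_add, add_smul, smul_add, smul_add]
      refine X.add_mem (X.add_mem ?_ (X.smul_mem _ hv)) (X.add_mem (hj _ trivial) (hj _ trivial))
      exact hYI (Submodule.subset_span ⟨u, hu, i, hi, rfl⟩)
    exact this
  -- not contained in φ X
  have h2 : ¬((sProd ((Y ⊔ X : Submodule Rᵐᵒᵖ M) : Set M) (J : Set R) : Set M) ⊆ φ X) := by
    intro hcon
    apply h
    refine Set.Subset.trans ?_ hcon
    have : sProd (X : Set M) (colR (X : Set M) Set.univ)
        ≤ sProd ((Y ⊔ X : Submodule Rᵐᵒᵖ M) : Set M) (J : Set R) := by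
      apply Submodule.span_le.mpr
      rintro z ⟨x, hx, a, ha, rfl⟩
      exact Submodule.subset_span
        ⟨x, Submodule.mem_sup_right hx, a, (hJmem a).mpr ⟨0, I.zero_mem, a, ha, (zero_add a).symm⟩, rfl⟩
    exact this
  rcases hX.2 (Y ⊔ X) J h1 h2 with hl | hr
  · exact Or.inl (fun y hy => hl (Submodule.mem_sup_left hy))
  · exact Or.inr (fun a ha => hr ((hJmem a).mpr ⟨a, ha, 0, hzero, (add_zero a).symm⟩))
end

section
/- Let X and Y be proper submodules of M with Y ⊆ X. Then: (1) if X is a φ-prime submodule of M, then X/Y is a φ_Y-prime submodule of M/Y; (2) if Y ⊆ φ(X) and X/Y is a φ_Y-prime submodule of M/Y, then X is a φ-prime submodule of M. -/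
open MulOpposite Submodule

variable {R : Type*} [Ring R] {M : Type*} [AddCommGroup M] [Module Rᵐᵒᵖ M]

lemma sProd_map {N : Type*} [AddCommGroup N] [Module Rᵐᵒᵖ N]
    (f : M →ₗ[Rᵐᵒᵖ] N) (S : Set M) (A : Set R) :
    (sProd S A).map f = sProd (f '' S) A := by
  unfold sProd
  rw [Submodule.map_span]
  congr 1
  ext z
  constructor
  · rintro ⟨w, ⟨y, hy, a, ha, rfl⟩, rfl⟩
    exact ⟨f y, ⟨y, hy, rfl⟩, a, ha, map_smul f (op a) y⟩
  · rintro ⟨_, ⟨y, hy, rfl⟩, a, ha, rfl⟩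
    exact ⟨op a • y, ⟨y, hy, a, ha, rfl⟩, map_smul f _ y⟩

/-- Let `X, Y` be proper submodules of `M` with `Y ⊆ X`. Then:
(1) if `X` is φ-prime, then `X/Y` is `φ_Y`-prime in `M/Y`;
(2) if `Y ⊆ φ(X)` and `X/Y` is `φ_Y`-prime in `M/Y`, then `X` is φ-prime. -/
theorem stmt_6 (φ : Submodule Rᵐᵒᵖ M → Set M) (hφ : GoodPhi φ)
    (X Y : Submodule Rᵐᵒᵖ M) (hX : X ≠ ⊤) (hY : Y ≠ ⊤) (hYX : Y ≤ X) :
    (PhiPrime φ X → PhiPrime (phiQuot φ Y) (X.map Y.mkQ)) ∧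
    ((Y : Set M) ⊆ φ X → PhiPrime (phiQuot φ Y) (X.map Y.mkQ) → PhiPrime φ X) := by
  have hsurj : Function.Surjective Y.mkQ := Y.mkQ_surjective
  have hcm : (X.map Y.mkQ).comap Y.mkQ = X := by
    rw [Submodule.comap_map_mkQ, sup_eq_right.mpr hYX]
  have hmapne : X.map Y.mkQ ≠ ⊤ := by
    intro h
    apply hX
    rw [← hcm, h, Submodule.comap_top]
  have hphiq : phiQuot φ Y (X.map Y.mkQ) = Y.mkQ '' φ X := by
    unfold phiQuot; rw [hcm]
  constructor
  · rintro ⟨-, hpr⟩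
    refine ⟨hmapne, fun Z I hsub hnsub => ?_⟩
    set Z' := Z.comap Y.mkQ with hZ'
    have hZmap : Z'.map Y.mkQ = Z := Submodule.map_comap_eq_of_surjective hsurj Z
    have hmapsP : (sProd (Z' : Set M) (I : Set R)).map Y.mkQ
        = sProd (Z : Set (M ⧸ Y)) (I : Set R) := by
      rw [sProd_map, ← hZmap, Submodule.map_coe]
    -- sProd Z' I ⊆ X
    have h1 : (sProd (Z' : Set M) (I : Set R) : Set M) ⊆ (X : Set M) := by
      have : (sProd (Z' : Set M) (I : Set R)).map Y.mkQ ≤ X.map Y.mkQ := by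
        rw [hmapsP]; exact hsub
      have := (Submodule.map_le_iff_le_comap.mp this)
      rw [hcm] at this
      exact this
    -- not contained in φ X
    have h2 : ¬((sProd (Z' : Set M) (I : Set R) : Set M) ⊆ φ X) := by
      intro hc
      apply hnsub
      rw [hphiq, ← hmapsP, Submodule.map_coe]
      exact Set.image_mono hc
    rcases hpr Z' I h1 h2 with h | h
    · left
      rw [← hZmap, Submodule.map_coe]
      rintro _ ⟨z, hz, rfl⟩
      exact ⟨z, h hz, rfl⟩
    · right
      intro r hr q _
      obtain ⟨m, rfl⟩ := hsurj q
      exact ⟨op r • m, h hr m trivial, map_smul Y.mkQ _ m⟩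
  · rintro hYphi ⟨-, hpr⟩
    refine ⟨hX, fun Z I hsub hnsub => ?_⟩
    -- φ X is a submodule since it contains 0 ∈ Y
    obtain ⟨P, hP⟩ : ∃ P : Submodule Rᵐᵒᵖ M, φ X = (P : Set M) := by
      rcases (hφ X).2 with h | h
      · exfalso
        have := hYphi Y.zero_mem
        rw [h] at this
        exact this
      · exact h
    have hmapsP : (sProd (Z : Set M) (I : Set R)).map Y.mkQ
        = sProd (Z.map Y.mkQ : Set (M ⧸ Y)) (I : Set R) := by
      rw [sProd_map, Submodule.map_coe]
    have h1 : (sProd ((Z.map Y.mkQ : Submodule Rᵐᵒᵖ (M ⧸ Y)) : Set (M ⧸ Y)) (I : Set R)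
        : Set (M ⧸ Y)) ⊆ ((X.map Y.mkQ : Submodule Rᵐᵒᵖ (M ⧸ Y)) : Set (M ⧸ Y)) := by
      rw [← hmapsP]
      exact Submodule.map_mono (fun x hx => hsub hx)
    have h2 : ¬((sProd ((Z.map Y.mkQ : Submodule Rᵐᵒᵖ (M ⧸ Y)) : Set (M ⧸ Y)) (I : Set R)
        : Set (M ⧸ Y)) ⊆ phiQuot φ Y (X.map Y.mkQ)) := by
      intro hc
      apply hnsub
      intro x hx
      have : Y.mkQ x ∈ phiQuot φ Y (X.map Y.mkQ) := by
        apply hc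
        rw [← hmapsP]
        exact ⟨x, hx, rfl⟩
      rw [hphiq] at this
      obtain ⟨y, hy, hxy⟩ := this
      have hsubY : x - y ∈ Y := by
        rw [← Submodule.Quotient.eq]
        exact hxy.symm
      have : x - y ∈ φ X := hYphi hsubY
      rw [hP] at this hy ⊢
      have := P.add_mem this hy
      rwa [sub_add_cancel] at this
    rcases hpr (Z.map Y.mkQ) I h1 h2 with h | h
    · left
      intro z hz
      have : Y.mkQ z ∈ X.map Y.mkQ := h ⟨z, hz, rfl⟩
      obtain ⟨x, hx, hxz⟩ := this
      have hsubY : x - z ∈ Y := by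
        rw [← Submodule.Quotient.eq]
        exact hxz
      have : x - (x - z) ∈ X := X.sub_mem hx (hYX hsubY)
      rwa [sub_sub_cancel] at this
    · right
      intro r hr m _
      have : op r • Y.mkQ m ∈ X.map Y.mkQ := h hr (Y.mkQ m) trivial
      rw [← map_smul] at this
      have := Submodule.mem_comap.mpr this
      rwa [hcm] at this
end

section
/- Let X and Y be proper submodules of M with Y ⊆ X. Then: (1) if φ(X) ⊆ Y and X is a φ-prime submodule of M, then X/Y is a weakly prime submodule of M/Y; (2) if φ(Y) ⊆ φ(X), Y is a φ-prime submodule of M, and X/Y is a weakly prime submodule of M/Y, then X is a φ-prime submodule of M. -/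
open MulOpposite Submodule

variable {R : Type*} [Ring R] {M : Type*} [AddCommGroup M] [Module Rᵐᵒᵖ M]

lemma map_sProd {M₂ : Type*} [AddCommGroup M₂] [Module Rᵐᵒᵖ M₂]
    (f : M →ₗ[Rᵐᵒᵖ] M₂) (S : Set M) (A : Set R) :
    (sProd S A).map f = sProd (f '' S) A := by
  rw [sProd, sProd, Submodule.map_span]
  congr 1
  ext z
  constructor
  · rintro ⟨w, ⟨y, hy, a, ha, rfl⟩, rfl⟩
    exact ⟨f y, ⟨y, hy, rfl⟩, a, ha, by rw [map_smul]⟩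
  · rintro ⟨y, ⟨y0, hy0, rfl⟩, a, ha, rfl⟩
    exact ⟨op a • y0, ⟨y0, hy0, a, ha, rfl⟩, map_smul f _ _⟩

lemma comap_map_mkQ_eq {X Y : Submodule Rᵐᵒᵖ M} (hYX : Y ≤ X) :
    (X.map Y.mkQ).comap Y.mkQ = X := by
  rw [Submodule.comap_map_eq, Y.ker_mkQ, sup_eq_left.mpr hYX]

/-- Let `X, Y` be proper submodules of `M` with `Y ⊆ X`. Then:
(1) if `φ(X) ⊆ Y` and `X` is φ-prime, then `X/Y` is weakly prime in `M/Y`;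
(2) if `φ(Y) ⊆ φ(X)`, `Y` is φ-prime and `X/Y` is weakly prime in `M/Y`, then `X`
is φ-prime. -/
theorem stmt_7 (φ : Submodule Rᵐᵒᵖ M → Set M) (hφ : GoodPhi φ)
    (X Y : Submodule Rᵐᵒᵖ M) (hX : X ≠ ⊤) (hY : Y ≠ ⊤) (hYX : Y ≤ X) :
    (φ X ⊆ (Y : Set M) → PhiPrime φ X → WeaklyPrime (X.map Y.mkQ)) ∧
    (φ Y ⊆ φ X → PhiPrime φ Y → WeaklyPrime (X.map Y.mkQ) → PhiPrime φ X) := by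
  have hXcomap : (X.map Y.mkQ).comap Y.mkQ = X := comap_map_mkQ_eq hYX
  constructor
  · intro hφX hXp
    constructor
    · intro h
      apply hX
      have := congrArg (Submodule.comap Y.mkQ) h
      rw [hXcomap, Submodule.comap_top] at this
      exact this
    · intro Z I hne hsub
      set Y' := Z.comap Y.mkQ with hY'def
      have hmap : Z = Y'.map Y.mkQ :=
        (Submodule.map_comap_eq_of_surjective (Y.mkQ_surjective) Z).symm
      have hZset : (Z : Set (M ⧸ Y)) = Y.mkQ '' (Y' : Set M) := by
        rw [hmap]; exact Submodule.map_coe _ _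
      have hsprod : sProd (Z : Set (M ⧸ Y)) (I : Set R)
          = (sProd (Y' : Set M) (I : Set R)).map Y.mkQ := by
        rw [map_sProd, hZset]
      have h1 : (sProd (Y' : Set M) (I : Set R) : Set M) ⊆ (X : Set M) := by
        intro m hm
        have hmem : Y.mkQ m ∈ (sProd (Z : Set (M ⧸ Y)) (I : Set R) : Set (M ⧸ Y)) := by
          rw [hsprod]; exact ⟨m, hm, rfl⟩
        have := hsub hmem
        rw [← hXcomap]
        exact this
      have h2 : ¬((sProd (Y' : Set M) (I : Set R) : Set M) ⊆ φ X) := by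
        intro hc
        apply hne
        rw [hsprod, Submodule.eq_bot_iff]
        rintro z ⟨m, hm, rfl⟩
        have : m ∈ Y := hφX (hc hm)
        simpa [Submodule.mkQ_apply] using (Submodule.Quotient.mk_eq_zero Y).mpr this
      rcases hXp.2 Y' I h1 h2 with h | h
      · left
        rw [hZset]
        rintro _ ⟨m, hm, rfl⟩
        exact ⟨m, h hm, rfl⟩
      · right
        intro r hr q _
        obtain ⟨m, rfl⟩ := Y.mkQ_surjective q
        rw [← map_smul]
        exact ⟨op r • m, h hr m (Set.mem_univ m), rfl⟩
  · intro hφYX hYp hWp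
    refine ⟨hX, ?_⟩
    intro Z I hsub hnsub
    by_cases hb : (sProd (Z : Set M) (I : Set R) : Set M) ⊆ (Y : Set M)
    · rcases hYp.2 Z I hb (fun h => hnsub (fun x hx => hφYX (h hx))) with h | h
      · exact Or.inl (h.trans hYX)
      · exact Or.inr (fun r hr m hm => hYX (h hr m hm))
    · set Z' := Z.map Y.mkQ with hZ'def
      have hZset : (Z' : Set (M ⧸ Y)) = Y.mkQ '' (Z : Set M) := Submodule.map_coe _ _
      have hsprod : sProd (Z' : Set (M ⧸ Y)) (I : Set R)
          = (sProd (Z : Set M) (I : Set R)).map Y.mkQ := by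
        rw [map_sProd, hZset]
      have hne : sProd (Z' : Set (M ⧸ Y)) (I : Set R) ≠ ⊥ := by
        intro h
        apply hb
        intro m hm
        have : Y.mkQ m ∈ sProd (Z' : Set (M ⧸ Y)) (I : Set R) := by
          rw [hsprod]; exact ⟨m, hm, rfl⟩
        rw [h, Submodule.mem_bot] at this
        simpa using (Submodule.Quotient.mk_eq_zero Y).mp (by simpa [Submodule.mkQ_apply] using this)
      have hsub' : (sProd (Z' : Set (M ⧸ Y)) (I : Set R) : Set (M ⧸ Y))
          ⊆ (X.map Y.mkQ : Set (M ⧸ Y)) := by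
        rw [hsprod]
        rintro _ ⟨m, hm, rfl⟩
        exact ⟨m, hsub hm, rfl⟩
      rcases hWp.2 Z' I hne hsub' with h | h
      · left
        intro m hm
        have : Y.mkQ m ∈ X.map Y.mkQ := h ⟨m, hm, rfl⟩
        rw [← hXcomap]; exact this
      · right
        intro r hr m _
        have := h hr (Y.mkQ m) (Set.mem_univ _)
        rw [← map_smul] at this
        have h2 : op r • m ∈ (X.map Y.mkQ).comap Y.mkQ := this
        rwa [hXcomap] at h2
end

section
/- Let M be a torsion-free right R-module and let m ∈ M with m ≠ 0. Then the cyclic submodule mR is a prime submodule of M if and only if mR is an almost prime submodule of M. -/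
open MulOpposite Submodule

variable {R : Type*} [Ring R] {M : Type*} [AddCommGroup M] [Module Rᵐᵒᵖ M]

/-- Let `M` be a torsion-free right `R`-module and `m ≠ 0`.
Then `mR` is a prime submodule of `M` iff `mR` is an almost prime submodule of `M`. -/
theorem stmt_9 (htf : ∀ m : M, m ≠ 0 → ∀ r : R, op r • m = 0 → r = 0)
    (m : M) (hm : m ≠ 0) :
    PrimeSub (Submodule.span Rᵐᵒᵖ ({m} : Set M)) ↔
      AlmostPrime (Submodule.span Rᵐᵒᵖ ({m} : Set M)) := by
  set X := Submodule.span Rᵐᵒᵖ ({m} : Set M) with hXdef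
  set A : Set R := colR (X : Set M) Set.univ with hAdef
  constructor
  · rintro ⟨hne, h⟩
    exact ⟨hne, fun Y I h1 _ => h Y I h1⟩
  · rintro ⟨hne, h⟩
    refine ⟨hne, fun Y I hYI => ?_⟩
    by_cases hXI : (sProd (X : Set M) (I : Set R) : Set M) ⊆ (sProd (X : Set M) A : Set M)
    · -- XI ⊆ XA forces I ⊆ A by torsion-freeness
      right
      intro i hi
      have hmX : m ∈ X := Submodule.mem_span_singleton_self m
      have h1 : op i • m ∈ sProd (X : Set M) (I : Set R) :=
        Submodule.subset_span ⟨m, hmX, i, hi, rfl⟩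
      have h2 : op i • m ∈ sProd (X : Set M) A := hXI h1
      have key : ∀ z ∈ sProd (X : Set M) A, ∃ b ∈ A, z = op b • m := by
        intro z hz
        refine Submodule.span_induction ?_ ?_ ?_ ?_ hz
        · rintro w ⟨x, hx, a, ha, rfl⟩
          obtain ⟨c, rfl⟩ := Submodule.mem_span_singleton.mp hx
          refine ⟨unop c * a, ?_, ?_⟩
          · intro x _
            have : op (unop c * a) • x = op a • (op (unop c) • x) := by
              rw [← mul_smul, ← op_mul]
            rw [this]
            exact ha _ (Set.mem_univ _)
          · rw [← mul_smul, op_mul, op_unop]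
        · exact ⟨0, fun x _ => by simp, by simp⟩
        · rintro x y - - ⟨b₁, hb₁, rfl⟩ ⟨b₂, hb₂, rfl⟩
          refine ⟨b₁ + b₂, ?_, by rw [op_add, add_smul]⟩
          intro x _
          rw [op_add, add_smul]
          exact X.add_mem (hb₁ x (Set.mem_univ _)) (hb₂ x (Set.mem_univ _))
        · rintro c x - ⟨b, hb, rfl⟩
          refine ⟨b * unop c, ?_, ?_⟩
          · intro x _
            have : op (b * unop c) • x = op (unop c) • (op b • x) := by
              rw [← mul_smul, ← op_mul]
            rw [this]
            exact X.smul_mem _ (hb x (Set.mem_univ _))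
          · rw [← mul_smul, op_mul, op_unop]
      obtain ⟨b, hb, heq⟩ := key _ h2
      have hzero : op (i - b) • m = 0 := by
        rw [op_sub, sub_smul, ← heq, sub_self]
      have : i = b := sub_eq_zero.mp (htf m hm _ hzero)
      intro x _
      rw [this]
      exact hb x (Set.mem_univ _)
    · -- apply almost primeness to (Y ⊔ X, I)
      have hsub : (sProd ((Y ⊔ X : Submodule Rᵐᵒᵖ M) : Set M) (I : Set R) : Set M)
          ⊆ (X : Set M) := by
        intro z hz
        refine Submodule.span_le.mpr ?_ hz
        rintro w ⟨y, hy, a, ha, rfl⟩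
        rcases Submodule.mem_sup.mp hy with ⟨y₁, hy₁, x, hx, rfl⟩
        have h1 : op a • y₁ ∈ X := hYI (Submodule.subset_span ⟨y₁, hy₁, a, ha, rfl⟩)
        rw [smul_add]
        exact X.add_mem h1 (X.smul_mem _ hx)
      have hnot : ¬((sProd ((Y ⊔ X : Submodule Rᵐᵒᵖ M) : Set M) (I : Set R) : Set M)
          ⊆ (sProd (X : Set M) A : Set M)) := by
        intro hcon
        apply hXI
        refine subset_trans ?_ hcon
        intro z hz
        refine Submodule.span_le.mpr ?_ hz
        rintro w ⟨x, hx, a, ha, rfl⟩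
        exact Submodule.subset_span ⟨x, Submodule.mem_sup_right hx, a, ha, rfl⟩
      rcases h (Y ⊔ X) I hsub hnot with h1 | h1
      · exact Or.inl (fun y hy => h1 (Submodule.mem_sup_left hy))
      · exact Or.inr h1
end

section
/- Let a ∈ R with a ≠ 0 be such that Ma = {ma : m ∈ M} is a submodule of M, (0:_M a) ⊆ Ma, and a(Ma:_R M) = (Ma:_R M)a. Then Ma is a prime submodule of M if and only if Ma is an almost prime submodule of M. -/
open MulOpposite Submodule

variable {R : Type*} [Ring R] {M : Type*} [AddCommGroup M] [Module Rᵐᵒᵖ M]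

private lemma stmt_10_aux (a : R) (N : Submodule Rᵐᵒᵖ M)
    (hN : (N : Set M) = Set.range fun m : M => op a • m)
    (hc : {x : R | ∃ b ∈ (colR (N : Set M) Set.univ : Set R), x = a * b} =
          {x : R | ∃ b ∈ (colR (N : Set M) Set.univ : Set R), x = b * a}) :
    (sProd (N : Set M) ((colR (N : Set M) Set.univ : Set R)) : Set M) ⊆
      {x : M | ∃ n ∈ (N : Set M), x = op a • n} := by
  set J : Set R := colR (N : Set M) Set.univ with hJ
  set G : Set M := {z | ∃ y ∈ (N : Set M), ∃ b ∈ J, z = op b • y} with hG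
  -- J is a right ideal
  have hJr : ∀ b ∈ J, ∀ s : R, b * s ∈ J := by
    intro b hb s m _
    have : op (b * s) • m = op s • (op b • m) := by rw [op_mul, mul_smul]
    rw [this]
    exact N.smul_mem _ (hb m trivial)
  -- G is closed under scalar multiplication and negation
  have hGs : ∀ (r : Rᵐᵒᵖ), ∀ z ∈ G, r • z ∈ G := by
    rintro r z ⟨y, hy, b, hb, rfl⟩
    refine ⟨y, hy, b * unop r, hJr b hb _, ?_⟩
    rw [← mul_smul, op_mul, op_unop]
  have hGn : ∀ z ∈ G, -z ∈ G := by
    rintro z ⟨y, hy, b, hb, rfl⟩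
    exact ⟨-y, N.neg_mem hy, b, hb, by rw [smul_neg]⟩
  -- step 1 : the span is contained in the additive closure of G
  have step1 : (sProd (N : Set M) J : Set M) ⊆ (AddSubmonoid.closure G : Set M) := by
    intro x hx
    refine Submodule.span_induction (p := fun x _ => x ∈ AddSubmonoid.closure G)
      (fun z hz => AddSubmonoid.subset_closure hz)
      (AddSubmonoid.zero_mem _)
      (fun z w _ _ hz hw => AddSubmonoid.add_mem _ hz hw)
      (fun r z _ hz => ?_) hx
    refine AddSubmonoid.closure_induction (motive := fun z _ => r • z ∈ AddSubmonoid.closure G)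
      (fun z hz => AddSubmonoid.subset_closure (hGs r z hz))
      (by show r • (0 : M) ∈ _; rw [smul_zero]; exact AddSubmonoid.zero_mem _)
      (fun z w _ _ hz hw => by
        show r • (z + w) ∈ _
        rw [smul_add]; exact AddSubmonoid.add_mem _ hz hw) hz
  -- step 2 : the additive closure of G is contained in aN
  intro x hx
  refine AddSubmonoid.closure_induction
    (motive := fun x _ => x ∈ {x : M | ∃ n ∈ (N : Set M), x = op a • n})
    (fun z hz => ?_)
    ⟨0, N.zero_mem, by rw [smul_zero]⟩
    (fun z w _ _ ⟨n₁, hn₁, h₁⟩ ⟨n₂, hn₂, h₂⟩ =>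
      ⟨n₁ + n₂, N.add_mem hn₁ hn₂, by rw [h₁, h₂, smul_add]⟩)
    (step1 hx)
  obtain ⟨y, hy, b, hb, rfl⟩ := hz
  rw [hN] at hy
  obtain ⟨m, rfl⟩ := hy
  have hab : a * b ∈ {x : R | ∃ b ∈ J, x = b * a} := by
    rw [← hc]; exact ⟨b, hb, rfl⟩
  obtain ⟨c, hcJ, hcEq⟩ := hab
  refine ⟨op c • m, hcJ m trivial, ?_⟩
  show op b • (op a • m) = op a • op c • m
  rw [← mul_smul, ← op_mul, hcEq, op_mul, mul_smul]

/-- Let `0 ≠ a ∈ R` be such that `Ma = {m·a : m ∈ M}` is a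
submodule `N` of `M`, `(0 :_M a) ⊆ Ma` and `a(Ma :_R M) = (Ma :_R M)a`. Then `Ma`
is a prime submodule of `M` iff `Ma` is an almost prime submodule of `M`. -/
theorem stmt_10 (a : R) (ha : a ≠ 0) (N : Submodule Rᵐᵒᵖ M)
    (hN : (N : Set M) = Set.range fun m : M => op a • m)
    (h0 : {m : M | op a • m = 0} ⊆ (N : Set M))
    (hc : {x : R | ∃ b ∈ (colR (N : Set M) Set.univ : Set R), x = a * b} =
          {x : R | ∃ b ∈ (colR (N : Set M) Set.univ : Set R), x = b * a}) :
    PrimeSub N ↔ AlmostPrime N := by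
  constructor
  · exact fun hP => ⟨hP.1, fun Y I h _ => hP.2 Y I h⟩
  intro hA
  refine ⟨hA.1, fun Y I hYI => ?_⟩
  -- the two-sided ideal (N :_R M)
  set Jt : TwoSidedIdeal R := colTI N ⊤ with hJt
  have hJtMem : ∀ r : R, r ∈ Jt ↔ ∀ m : M, op r • m ∈ N := by
    intro r
    rw [hJt, colTI]
    refine (TwoSidedIdeal.mem_mk' _ _ _ _ _ _ _).trans ?_
    exact ⟨fun h m => h m trivial, fun h m _ => h m⟩
  have haJt : a ∈ Jt := by
    rw [hJtMem]
    intro m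
    show op a • m ∈ (N : Set M)
    rw [hN]; exact ⟨m, rfl⟩
  set I' : TwoSidedIdeal R := I ⊔ Jt with hI'
  -- Y I' ⊆ N
  have hI'N : ∀ b ∈ I', ∀ y ∈ Y, op b • y ∈ N := by
    intro b hb y hy
    obtain ⟨b₁, hb₁, b₂, hb₂, rfl⟩ := TwoSidedIdeal.mem_sup.1 hb
    rw [op_add, add_smul]
    refine N.add_mem ?_ ((hJtMem b₂).1 hb₂ y)
    exact hYI (Submodule.subset_span ⟨y, hy, b₁, hb₁, rfl⟩)
  have hspan : (sProd (Y : Set M) (I' : Set R) : Set M) ⊆ (N : Set M) := by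
    refine Submodule.span_le.2 ?_
    rintro z ⟨y, hy, b, hb, rfl⟩
    exact hI'N b hb y hy
  by_cases hsub : (sProd (Y : Set M) (I' : Set R) : Set M) ⊆
      (sProd (N : Set M) ((colR (N : Set M) Set.univ : Set R)) : Set M)
  · -- then every y ∈ Y lies in N, since a•y ∈ N(N:M) ⊆ aN and (0:a) ⊆ N
    left
    intro y hy
    have h1 : op a • y ∈ (sProd (Y : Set M) (I' : Set R) : Set M) :=
      Submodule.subset_span ⟨y, hy, a, TwoSidedIdeal.mem_sup_right haJt, rfl⟩
    obtain ⟨n, hnN, heq⟩ := stmt_10_aux a N hN hc (hsub h1)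
    have h2 : op a • (y - n) = 0 := by rw [smul_sub, heq, sub_self]
    have h3 : y - n ∈ (N : Set M) := h0 h2
    have hyn : y = (y - n) + n := by abel
    rw [hyn]
    exact N.add_mem h3 hnN
  · rcases hA.2 Y I' hspan hsub with h | h
    · exact Or.inl h
    · right
      intro x hx
      exact h (TwoSidedIdeal.mem_sup_left hx)
end

section
/- Let X be a proper submodule of M and I an ideal of R such that MI ≠ XI and XI ≠ X. Then the submodule Y = XI is a φ-prime submodule of M if and only if Y = φ(Y). -/
open MulOpposite Submodule

variable {R : Type*} [Ring R] {M : Type*} [AddCommGroup M] [Module Rᵐᵒᵖ M]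

/-- Let `X` be a proper submodule of `M` and `I` an ideal of `R`
such that `MI ≠ XI` and `XI ≠ X`. Then `Y = XI` is a φ-prime submodule of `M` iff
`Y = φ(Y)`. -/
theorem stmt_12 (φ : Submodule Rᵐᵒᵖ M → Set M) (hφ : GoodPhi φ)
    (X : Submodule Rᵐᵒᵖ M) (hX : X ≠ ⊤) (I : TwoSidedIdeal R)
    (h1 : sProd (Set.univ : Set M) (I : Set R) ≠ sProd (X : Set M) (I : Set R))
    (h2 : sProd (X : Set M) (I : Set R) ≠ X) :
    PhiPrime φ (sProd (X : Set M) (I : Set R)) ↔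
      (sProd (X : Set M) (I : Set R) : Set M) = φ (sProd (X : Set M) (I : Set R)) := by
  set Y := sProd (X : Set M) (I : Set R) with hYdef
  have hYX : Y ≤ X := by
    rw [hYdef]
    refine span_le.2 ?_
    rintro z ⟨y, hy, a, ha, rfl⟩
    exact X.smul_mem _ hy
  constructor
  · rintro ⟨hne, hp⟩
    by_contra hne2
    have hnsub : ¬ ((Y : Set M) ⊆ φ Y) := fun h => hne2 (Set.Subset.antisymm h (hφ Y).1)
    rcases hp X I (subset_refl _) hnsub with hXY | hI
    · exact h2 (le_antisymm hYX (SetLike.coe_subset_coe.1 hXY))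
    · apply h1
      apply le_antisymm
      · refine span_le.2 ?_
        rintro z ⟨y, -, a, ha, rfl⟩
        exact hI ha y (Set.mem_univ y)
      · rw [hYdef]
        exact Submodule.span_mono (by
          rintro z ⟨y, hy, a, ha, rfl⟩
          exact ⟨y, Set.mem_univ y, a, ha, rfl⟩)
  · intro heq
    refine ⟨fun h => hX (top_le_iff.1 (h ▸ hYX)), fun Z J hsub hns => absurd (heq ▸ hsub) hns⟩
end
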